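/- Two formulas are alpha-congruent if and only if they have the same normal form under the identity substitution: φ =_α ψ iff φ[ε] = ψ[ε]; moreover φ[ε] =_α φ. -/

import Mathlib

namespace EJ

/-- Justification terms Tm(C): variables, constants, application and sum. -/
inductive Tm : Type
  | var : ℕ → Tm
  | const : ℕ → Tm
  | app : Tm → Tm → Tm
  | plus : Tm → Tm → Tm
  deriving DecidableEq

/-- Formulas Fm(C,D) of ∈_J-Logic. -/
inductive Fm : Type
  | pvar : ℕ → Fm
  | pconst : ℕ → Fm
  | imp : Fm → Fm → Fm
  | neg : Fm → Fm
  | ideq : Fm → Fm → Fm            -- φ ≡ ψ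
  | ref : Fm → Fm → Fm             -- φ < ψ
  | teq : Tm → Tm → Fm             -- s ≡ t
  | tle : Tm → Tm → Fm             -- s ≤ t
  | isTrue : Fm → Fm               -- φ : true
  | isFalse : Fm → Fm              -- φ : false
  | box : Fm → Fm                  -- □φ
  | just : Fm → Tm → Fm            -- φ : t
  | fAll : ℕ → Fm → Fm             -- ∀x.φ
  | jAll : ℕ → Fm → Fm             -- ⋀u.φ
  deriving DecidableEq

/-- variables of a term -/
def Tm.vars : Tm → Finset ℕ
  | .var u => {u}
  | .const _ => ∅
  | .app s t => s.vars ∪ t.vars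
  | .plus s t => s.vars ∪ t.vars

/-- constants of a term -/
def Tm.consts : Tm → Finset ℕ
  | .var _ => ∅
  | .const c => {c}
  | .app s t => s.consts ∪ t.consts
  | .plus s t => s.consts ∪ t.consts

/-- free propositional variables -/
def Fm.fvarP : Fm → Finset ℕ
  | .pvar x => {x}
  | .pconst _ => ∅
  | .imp φ ψ => φ.fvarP ∪ ψ.fvarP
  | .neg φ => φ.fvarP
  | .ideq φ ψ => φ.fvarP ∪ ψ.fvarP
  | .ref φ ψ => φ.fvarP ∪ ψ.fvarP
  | .teq _ _ => ∅
  | .tle _ _ => ∅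
  | .isTrue φ => φ.fvarP
  | .isFalse φ => φ.fvarP
  | .box φ => φ.fvarP
  | .just φ _ => φ.fvarP
  | .fAll x φ => φ.fvarP.erase x
  | .jAll _ φ => φ.fvarP

/-- free justification variables -/
def Fm.fvarJ : Fm → Finset ℕ
  | .pvar _ => ∅
  | .pconst _ => ∅
  | .imp φ ψ => φ.fvarJ ∪ ψ.fvarJ
  | .neg φ => φ.fvarJ
  | .ideq φ ψ => φ.fvarJ ∪ ψ.fvarJ
  | .ref φ ψ => φ.fvarJ ∪ ψ.fvarJ
  | .teq s t => s.vars ∪ t.vars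
  | .tle s t => s.vars ∪ t.vars
  | .isTrue φ => φ.fvarJ
  | .isFalse φ => φ.fvarJ
  | .box φ => φ.fvarJ
  | .just φ t => φ.fvarJ ∪ t.vars
  | .fAll _ φ => φ.fvarJ
  | .jAll u φ => φ.fvarJ.erase u

/-- propositional constants occurring in a formula -/
def Fm.pconsts : Fm → Finset ℕ
  | .pvar _ => ∅
  | .pconst d => {d}
  | .imp φ ψ => φ.pconsts ∪ ψ.pconsts
  | .neg φ => φ.pconsts
  | .ideq φ ψ => φ.pconsts ∪ ψ.pconsts
  | .ref φ ψ => φ.pconsts ∪ ψ.pconsts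
  | .teq _ _ => ∅
  | .tle _ _ => ∅
  | .isTrue φ => φ.pconsts
  | .isFalse φ => φ.pconsts
  | .box φ => φ.pconsts
  | .just φ _ => φ.pconsts
  | .fAll _ φ => φ.pconsts
  | .jAll _ φ => φ.pconsts

/-- justification constants occurring in a formula -/
def Fm.jconsts : Fm → Finset ℕ
  | .pvar _ => ∅
  | .pconst _ => ∅
  | .imp φ ψ => φ.jconsts ∪ ψ.jconsts
  | .neg φ => φ.jconsts
  | .ideq φ ψ => φ.jconsts ∪ ψ.jconsts
  | .ref φ ψ => φ.jconsts ∪ ψ.jconsts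
  | .teq s t => s.consts ∪ t.consts
  | .tle s t => s.consts ∪ t.consts
  | .isTrue φ => φ.jconsts
  | .isFalse φ => φ.jconsts
  | .box φ => φ.jconsts
  | .just φ t => φ.jconsts ∪ t.consts
  | .fAll _ φ => φ.jconsts
  | .jAll _ φ => φ.jconsts

/-- all propositional variables (free or bound) -/
def Fm.varP : Fm → Finset ℕ
  | .pvar x => {x}
  | .pconst _ => ∅
  | .imp φ ψ => φ.varP ∪ ψ.varP
  | .neg φ => φ.varP
  | .ideq φ ψ => φ.varP ∪ ψ.varP
  | .ref φ ψ => φ.varP ∪ ψ.varP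
  | .teq _ _ => ∅
  | .tle _ _ => ∅
  | .isTrue φ => φ.varP
  | .isFalse φ => φ.varP
  | .box φ => φ.varP
  | .just φ _ => φ.varP
  | .fAll x φ => insert x φ.varP
  | .jAll _ φ => φ.varP

/-- all justification variables (free or bound) -/
def Fm.varJ : Fm → Finset ℕ
  | .pvar _ => ∅
  | .pconst _ => ∅
  | .imp φ ψ => φ.varJ ∪ ψ.varJ
  | .neg φ => φ.varJ
  | .ideq φ ψ => φ.varJ ∪ ψ.varJ
  | .ref φ ψ => φ.varJ ∪ ψ.varJ
  | .teq s t => s.vars ∪ t.vars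
  | .tle s t => s.vars ∪ t.vars
  | .isTrue φ => φ.varJ
  | .isFalse φ => φ.varJ
  | .box φ => φ.varJ
  | .just φ t => φ.varJ ∪ t.vars
  | .fAll _ φ => φ.varJ
  | .jAll u φ => insert u φ.varJ

/-- A substitution: maps propositional variables/constants to formulas and
justification variables/constants to terms. -/
structure Subst where
  pv : ℕ → Fm
  jv : ℕ → Tm
  pc : ℕ → Fm
  jc : ℕ → Tm

/-- the identity substitution ε -/
def Subst.id : Subst := ⟨Fm.pvar, Tm.var, Fm.pconst, Tm.const⟩

def Subst.updP (σ : Subst) (x : ℕ) (e : Fm) : Subst :=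
  { σ with pv := Function.update σ.pv x e }

def Subst.updJ (σ : Subst) (u : ℕ) (t : Tm) : Subst :=
  { σ with jv := Function.update σ.jv u t }

def Subst.updPC (σ : Subst) (d : ℕ) (e : Fm) : Subst :=
  { σ with pc := Function.update σ.pc d e }

def Subst.updJC (σ : Subst) (c : ℕ) (t : Tm) : Subst :=
  { σ with jc := Function.update σ.jc c t }

/-- a substitution restricted to variables (identity on constants) -/
def Subst.IdOnConsts (σ : Subst) : Prop := σ.pc = Fm.pconst ∧ σ.jc = Tm.const

/-- substitution applied to a term -/
def Tm.subst : Tm → Subst → Tm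
  | .var u, σ => σ.jv u
  | .const c, σ => σ.jc c
  | .app s t, σ => .app (s.subst σ) (t.subst σ)
  | .plus s t, σ => .plus (s.subst σ) (t.subst σ)

/-- the propositional variable forced by σ w.r.t. a quantified formula:
the least variable greater than all free propositional variables of the images
under σ of the free symbols of the formula -/
def pForced (σ : Subst) (φ : Fm) : ℕ :=
  ((φ.fvarP.biUnion fun w => (σ.pv w).fvarP) ∪
   (φ.pconsts.biUnion fun w => (σ.pc w).fvarP)).sup Nat.succ

/-- the justification variable forced by σ w.r.t. a quantified formula -/
def jForced (σ : Subst) (φ : Fm) : ℕ :=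
  ((φ.fvarP.biUnion fun w => (σ.pv w).fvarJ) ∪
   (φ.pconsts.biUnion fun w => (σ.pc w).fvarJ) ∪
   (φ.fvarJ.biUnion fun w => (σ.jv w).vars) ∪
   (φ.jconsts.biUnion fun w => (σ.jc w).vars)).sup Nat.succ

/-- capture-avoiding substitution on formulas, renaming bound variables
canonically to the forced fresh variable -/
def Fm.subst : Fm → Subst → Fm
  | .pvar x, σ => σ.pv x
  | .pconst d, σ => σ.pc d
  | .imp φ ψ, σ => .imp (φ.subst σ) (ψ.subst σ)
  | .neg φ, σ => .neg (φ.subst σ)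
  | .ideq φ ψ, σ => .ideq (φ.subst σ) (ψ.subst σ)
  | .ref φ ψ, σ => .ref (φ.subst σ) (ψ.subst σ)
  | .teq s t, σ => .teq (s.subst σ) (t.subst σ)
  | .tle s t, σ => .tle (s.subst σ) (t.subst σ)
  | .isTrue φ, σ => .isTrue (φ.subst σ)
  | .isFalse φ, σ => .isFalse (φ.subst σ)
  | .box φ, σ => .box (φ.subst σ)
  | .just φ t, σ => .just (φ.subst σ) (t.subst σ)
  | .fAll x φ, σ =>
      let y := pForced σ (.fAll x φ)
      .fAll y (φ.subst (σ.updP x (.pvar y)))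
  | .jAll u φ, σ =>
      let v := jForced σ (.jAll u φ)
      .jAll v (φ.subst (σ.updJ u (.var v)))

/-- single-point substitution [x := ψ] for a propositional variable -/
def Fm.subst1P (φ : Fm) (x : ℕ) (ψ : Fm) : Fm := φ.subst (Subst.id.updP x ψ)

/-- single-point substitution [u := t] for a justification variable -/
def Fm.subst1J (φ : Fm) (u : ℕ) (t : Tm) : Fm := φ.subst (Subst.id.updJ u t)

/-- composition of substitutions: (σ ∘ τ)(x) = σ(x)[τ] -/
def Subst.comp (σ τ : Subst) : Subst :=
  ⟨fun x => (σ.pv x).subst τ, fun u => (σ.jv u).subst τ,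
   fun d => (σ.pc d).subst τ, fun c => (σ.jc c).subst τ⟩

/-- alpha-congruence: the smallest equivalence relation compatible with all
connectives and identifying formulas differing only in bound variables -/
inductive Alpha : Fm → Fm → Prop
  | refl (φ) : Alpha φ φ
  | symm : Alpha φ ψ → Alpha ψ φ
  | trans : Alpha φ ψ → Alpha ψ χ → Alpha φ χ
  | imp : Alpha φ₁ ψ₁ → Alpha φ₂ ψ₂ → Alpha (.imp φ₁ φ₂) (.imp ψ₁ ψ₂)
  | ideq : Alpha φ₁ ψ₁ → Alpha φ₂ ψ₂ → Alpha (.ideq φ₁ φ₂) (.ideq ψ₁ ψ₂)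
  | ref : Alpha φ₁ ψ₁ → Alpha φ₂ ψ₂ → Alpha (.ref φ₁ φ₂) (.ref ψ₁ ψ₂)
  | neg : Alpha φ ψ → Alpha (.neg φ) (.neg ψ)
  | isTrue : Alpha φ ψ → Alpha (.isTrue φ) (.isTrue ψ)
  | isFalse : Alpha φ ψ → Alpha (.isFalse φ) (.isFalse ψ)
  | box : Alpha φ ψ → Alpha (.box φ) (.box ψ)
  | just (t) : Alpha φ ψ → Alpha (.just φ t) (.just ψ t)
  | jAll : Alpha φ (ψ.subst1J v (.var u)) → (u ≠ v → u ∉ ψ.fvarJ) →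
      Alpha (.jAll u φ) (.jAll v ψ)
  | fAll : Alpha φ (ψ.subst1P y (.pvar x)) → (x ≠ y → x ∉ ψ.fvarP) →
      Alpha (.fAll x φ) (.fAll y ψ)

/-- syntactical reference φ ≺ ψ -/
def Sref (φ ψ : Fm) : Prop :=
  ∃ (x : ℕ) (ψ' : Fm), ψ' ≠ .pvar x ∧ x ∈ ψ'.fvarP ∧ Alpha (ψ'.subst1P x φ) ψ

/-! ## derived connectives -/

def Fm.and (φ ψ : Fm) : Fm := .neg (.imp φ (.neg ψ))
def Fm.iff (φ ψ : Fm) : Fm := (Fm.imp φ ψ).and (Fm.imp ψ φ)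
def Fm.jEx (u : ℕ) (φ : Fm) : Fm := .neg (.jAll u (.neg φ))
def Fm.fEx (x : ℕ) (φ : Fm) : Fm := .neg (.fAll x (.neg φ))

/-- conjunction of a list of formulas -/
def bigAnd : List Fm → Fm
  | [] => .imp (.pvar 0) (.pvar 0)
  | [φ] => φ
  | φ :: ψ :: rest => Fm.and φ (bigAnd (ψ :: rest))

/-- the formula σ ≡_φ σ' : conjunction of σ(x) ≡ σ'(x) over the free variables
of φ (in the order of the underlying well-orderings) -/
def eqOnF (σ σ' : Subst) (φ : Fm) : Fm :=
  bigAnd (((φ.fvarP.sort (· ≤ ·)).map fun x => Fm.ideq (σ.pv x) (σ'.pv x)) ++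
          ((φ.fvarJ.sort (· ≤ ·)).map fun u => Fm.teq (σ.jv u) (σ'.jv u)))

/-- the formula σ ≡_t σ' for a term t -/
def eqOnT (σ σ' : Subst) (t : Tm) : Fm :=
  bigAnd ((t.vars.sort (· ≤ ·)).map fun u => Fm.teq (σ.jv u) (σ'.jv u))

/-! ## the Hilbert system Ax -/

/-- boolean evaluation treating formulas other than →, ¬ as atoms -/
def Fm.evalB (v : Fm → Bool) : Fm → Bool
  | .imp φ ψ => !(φ.evalB v) || ψ.evalB v
  | .neg φ => !(φ.evalB v)
  | φ => v φ

/-- propositional tautology (a sufficient set of tautologies) -/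
def Taut (φ : Fm) : Prop := ∀ v : Fm → Bool, φ.evalB v = true

/-- the axiom system Ax of ∈_J-Logic (Definition 3.1) -/
inductive Ax : Fm → Prop
  | taut : Taut φ → Ax φ
  | tarski (φ) : Ax ((Fm.isTrue φ).iff φ)
  | falsity (φ) : Ax ((Fm.isFalse φ).iff (.neg φ))
  | appl (φ ψ s t) :
      Ax (.imp (.just (.imp φ ψ) s) (.imp (.just φ t) (.just ψ (.app s t))))
  | weak1 (φ s t) : Ax (.imp (.just φ s) (.just φ (.plus s t)))
  | weak2 (φ s t) : Ax (.imp (.just φ t) (.just φ (.plus s t)))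
  | necJust (φ u) : u ∉ φ.fvarJ →
      Ax ((Fm.box φ).iff (Fm.jEx u (.just φ (.var u))))
  | boxT (φ) : Ax (.imp (.box φ) φ)
  | refAx : Sref φ ψ → Ax (.ref φ ψ)
  | refTrans (φ ψ χ) : Ax (.imp (.ref φ ψ) (.imp (.ref ψ χ) (.ref φ χ)))
  | alphaAx : Alpha φ ψ → Ax (.ideq φ ψ)
  | eqImp (φ ψ) : Ax (.imp (.ideq φ ψ) (.imp φ ψ))
  | substP (σ σ' φ) : Ax (.imp (eqOnF σ σ' φ) (.ideq (φ.subst σ) (φ.subst σ')))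
  | jExInst (φ u t) : Ax (.imp (φ.subst1J u t) (Fm.jEx u φ))
  | jAllInst (φ u t) : Ax (.imp (.jAll u φ) (φ.subst1J u t))
  | jDistrib (φ ψ u) :
      Ax (.imp (.jAll u (.imp ψ φ)) (.imp (.jAll u ψ) (.jAll u φ)))
  | jVac (φ ψ u) : u ∉ ψ.fvarJ →
      Ax (.imp (.jAll u (.imp ψ φ)) (.imp ψ (.jAll u φ)))
  | pExInst (φ x ψ) : Ax (.imp (φ.subst1P x ψ) (Fm.fEx x φ))
  | pAllInst (φ x ψ) : Ax (.imp (.fAll x φ) (φ.subst1P x ψ))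
  | pDistrib (φ ψ x) :
      Ax (.imp (.fAll x (.imp ψ φ)) (.imp (.fAll x ψ) (.fAll x φ)))
  | pVac (φ ψ x) : x ∉ ψ.fvarP →
      Ax (.imp (.fAll x (.imp ψ φ)) (.imp ψ (.fAll x φ)))
  | leDef (s t x) :
      Ax ((Fm.tle s t).iff
        (.fAll x (.imp (.just (.pvar x) s) (.just (.pvar x) t))))
  | ext (s t) : Ax ((Fm.teq s t).iff ((Fm.tle s t).and (Fm.tle t s)))
  | substT (σ σ' t) : Ax (.imp (eqOnT σ σ' t) (.teq (t.subst σ) (t.subst σ')))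
  | genJ : Ax φ → u ∈ φ.fvarJ → Ax (.jAll u φ)
  | genP : Ax φ → x ∈ φ.fvarP → Ax (.fAll x φ)

/-- derivability from Φ in the Hilbert system Ax with Modus Ponens -/
inductive Deriv (Φ : Set Fm) : Fm → Prop
  | hyp : φ ∈ Φ → Deriv Φ φ
  | ax : Ax φ → Deriv Φ φ
  | mp : Deriv Φ (.imp φ ψ) → Deriv Φ φ → Deriv Φ ψ

def Consistent (Φ : Set Fm) : Prop := ¬ ∃ φ, Deriv Φ φ ∧ Deriv Φ (.neg φ)

def MaxConsistent (Φ : Set Fm) : Prop :=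
  Consistent Φ ∧ ∀ ψ, ψ ∉ Φ → ¬ Consistent (insert ψ Φ)

/-- Henkin set (Definition 4.4) -/
def Henkin (Φ : Set Fm) : Prop :=
  MaxConsistent Φ ∧
  (∀ u φ, Deriv Φ (.jAll u φ) ↔ ∀ c : ℕ, Deriv Φ (φ.subst1J u (.const c))) ∧
  (∀ x φ, Deriv Φ (.fAll x φ) ↔ ∀ d : ℕ, Deriv Φ (φ.subst1P x (.pconst d)))

/-! ## semantics -/

/-- an assignment of propositions to propositional variables and indexes to
justification variables -/
structure Assign (P I : Type) where
  gp : ℕ → P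
  gj : ℕ → I

def Assign.updP {P I : Type} (γ : Assign P I) (x : ℕ) (m : P) : Assign P I :=
  ⟨Function.update γ.gp x m, γ.gj⟩

def Assign.updJ {P I : Type} (γ : Assign P I) (u : ℕ) (l : I) : Assign P I :=
  ⟨γ.gp, Function.update γ.gj u l⟩

/-- a model of ∈_J-Logic (Definition 4.1) -/
structure JModel where
  P : Type                                  -- the propositional universe M
  I : Type                                  -- the set L of indexes
  TRUE : Set P
  FALSE : Set P
  NEC : Set P
  REASON : I → Set P
  ref : P → P → Prop                        -- the reference relation <^M
  plusI : I → I → I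
  dotI : I → I → I
  leI : I → I → Prop
  G : Fm → Assign P I → P                   -- Gamma-function on formulas
  GT : Tm → Assign P I → I                  -- Gamma-function on terms
  cover : TRUE ∪ FALSE = Set.univ
  disj : TRUE ∩ FALSE = ∅
  nec_sub : NEC ⊆ TRUE
  nec_union : NEC = ⋃ l, REASON l
  le_iso : ∀ l k, leI l k ↔ REASON l ⊆ REASON k
  reason_inj : Function.Injective REASON
  ref_trans : Transitive ref
  -- structure conditions
  ep : ∀ x γ, G (.pvar x) γ = γ.gp x
  epT : ∀ u γ, GT (.var u) γ = γ.gj u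
  cp : ∀ φ γ γ', (∀ x ∈ Fm.fvarP φ, γ.gp x = Assign.gp γ' x) →
      (∀ u ∈ Fm.fvarJ φ, γ.gj u = Assign.gj γ' u) → G φ γ = G φ γ'
  cpT : ∀ t γ γ', (∀ u ∈ Tm.vars t, γ.gj u = Assign.gj γ' u) → GT t γ = GT t γ'
  sp : ∀ φ (σ : Subst) γ, σ.IdOnConsts →
      G (φ.subst σ) γ = G φ ⟨fun x => G (σ.pv x) γ, fun u => GT (σ.jv u) γ⟩
  spT : ∀ t (σ : Subst) γ, σ.IdOnConsts →
      GT (t.subst σ) γ = GT t ⟨fun x => G (σ.pv x) γ, fun u => GT (σ.jv u) γ⟩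
  rp : ∀ φ ψ γ, Sref φ ψ → ref (G φ γ) (G ψ γ)
  hp_plus : ∀ s t γ, GT (.plus s t) γ = plusI (GT s γ) (GT t γ)
  hp_dot : ∀ s t γ, GT (.app s t) γ = dotI (GT s γ) (GT t γ)
  -- truth conditions
  t_imp : ∀ φ ψ γ, (G (.imp φ ψ) γ ∈ TRUE ↔ (G φ γ ∈ FALSE ∨ G ψ γ ∈ TRUE))
  t_neg : ∀ φ γ, (G (.neg φ) γ ∈ TRUE ↔ G φ γ ∉ TRUE)
  t_true : ∀ φ γ, (G (.isTrue φ) γ ∈ TRUE ↔ G φ γ ∈ TRUE)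
  t_false : ∀ φ γ, (G (.isFalse φ) γ ∈ TRUE ↔ G φ γ ∈ FALSE)
  t_ideq : ∀ φ ψ γ, (G (.ideq φ ψ) γ ∈ TRUE ↔ G φ γ = G ψ γ)
  t_ref : ∀ φ ψ γ, (G (.ref φ ψ) γ ∈ TRUE ↔ ref (G φ γ) (G ψ γ))
  t_teq : ∀ s t γ, (G (.teq s t) γ ∈ TRUE ↔ GT s γ = GT t γ)
  t_tle : ∀ s t γ, (G (.tle s t) γ ∈ TRUE ↔ leI (GT s γ) (GT t γ))
  t_box : ∀ φ γ, (G (.box φ) γ ∈ TRUE ↔ G φ γ ∈ NEC)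
  t_just : ∀ φ t γ, (G (.just φ t) γ ∈ TRUE ↔ G φ γ ∈ REASON (GT t γ))
  t_app : ∀ φ ψ s t γ, G (.imp φ ψ) γ ∈ REASON (GT s γ) →
      G φ γ ∈ REASON (GT t γ) → G ψ γ ∈ REASON (GT (.app s t) γ)
  t_plusJ : ∀ φ s t γ, G φ γ ∈ REASON (GT s γ) ∪ REASON (GT t γ) →
      G φ γ ∈ REASON (GT (.plus s t) γ)
  t_jAll : ∀ u φ γ, (G (.jAll u φ) γ ∈ TRUE ↔ ∀ l, G φ (γ.updJ u l) ∈ TRUE)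
  t_fAll : ∀ x φ γ, (G (.fAll x φ) γ ∈ TRUE ↔ ∀ m, G φ (γ.updP x m) ∈ TRUE)

/-- satisfaction -/
def JModel.Sat (M : JModel) (γ : Assign M.P M.I) (φ : Fm) : Prop :=
  M.G φ γ ∈ M.TRUE

/-- logical consequence over all models -/
def Conseq (Φ : Set Fm) (φ : Fm) : Prop :=
  ∀ (M : JModel) (γ : Assign M.P M.I), (∀ ψ ∈ Φ, M.Sat γ ψ) → M.Sat γ φ

/-! ## S4 extensions -/

/-- the axioms of Ax + (4) -/
inductive Ax4 : Fm → Prop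
  | base : Ax φ → Ax4 φ
  | four (φ) : Ax4 (.imp (.box φ) (.box (.box φ)))

/-- derivability in Ax + (4) + (AxNec): MP plus Axiom Necessitation -/
inductive Deriv4 (Φ : Set Fm) : Fm → Prop
  | hyp : φ ∈ Φ → Deriv4 Φ φ
  | ax : Ax4 φ → Deriv4 Φ φ
  | axnec : Ax4 φ → Deriv4 Φ (.box φ)
  | mp : Deriv4 Φ (.imp φ ψ) → Deriv4 Φ φ → Deriv4 Φ ψ

/-- truth condition (4) -/
def Cond4 (M : JModel) : Prop :=
  ∀ φ γ, M.Sat γ (.box φ) → M.Sat γ (.box (.box φ))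

/-- truth condition (AxNec) -/
def CondAxNec (M : JModel) : Prop :=
  ∀ φ γ, Ax4 φ → M.Sat γ (.box φ)

/-! ## basic modal language and S4 -/

inductive MFm : Type
  | var : ℕ → MFm
  | imp : MFm → MFm → MFm
  | neg : MFm → MFm
  | box : MFm → MFm
  deriving DecidableEq

def MFm.toFm : MFm → Fm
  | .var x => .pvar x
  | .imp a b => .imp a.toFm b.toFm
  | .neg a => .neg a.toFm
  | .box a => .box a.toFm

def MFm.evalB (v : MFm → Bool) : MFm → Bool
  | .imp a b => !(a.evalB v) || b.evalB v
  | .neg a => !(a.evalB v)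
  | a => v a

def MTaut (a : MFm) : Prop := ∀ v, a.evalB v = true

/-- the modal logic S4 -/
inductive S4 : MFm → Prop
  | taut : MTaut a → S4 a
  | axK (a b) : S4 (.imp (.box (.imp a b)) (.imp (.box a) (.box b)))
  | axT (a) : S4 (.imp (.box a) a)
  | ax4 (a) : S4 (.imp (.box a) (.box (.box a)))
  | mp : S4 (.imp a b) → S4 a → S4 b
  | nec : S4 a → S4 (.box a)

/-- an S4 frame: reflexive and transitive accessibility -/
structure S4Frame where
  W : Type
  R : W → W → Prop
  refl : Reflexive R
  trans : Transitive R

/-- Kripke satisfaction -/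
def KSat (F : S4Frame) (g : F.W → ℕ → Prop) : F.W → MFm → Prop
  | w, .var x => g w x
  | w, .imp a b => KSat F g w a → KSat F g w b
  | w, .neg a => ¬ KSat F g w a
  | w, .box a => ∀ w', F.R w w' → KSat F g w' a

def pImg (σ : Subst) (φ : Fm) : Finset ℕ :=
  (φ.fvarP.biUnion fun w => (σ.pv w).fvarP) ∪
  (φ.pconsts.biUnion fun w => (σ.pc w).fvarP)

def jImg (σ : Subst) (φ : Fm) : Finset ℕ :=
  ((φ.fvarP.biUnion fun w => (σ.pv w).fvarJ) ∪
   (φ.pconsts.biUnion fun w => (σ.pc w).fvarJ) ∪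
   (φ.fvarJ.biUnion fun w => (σ.jv w).vars) ∪
   (φ.jconsts.biUnion fun w => (σ.jc w).vars))

def pcImg (σ : Subst) (φ : Fm) : Finset ℕ :=
  (φ.fvarP.biUnion fun w => (σ.pv w).pconsts) ∪
  (φ.pconsts.biUnion fun w => (σ.pc w).pconsts)

def jcImg (σ : Subst) (φ : Fm) : Finset ℕ :=
  ((φ.fvarP.biUnion fun w => (σ.pv w).jconsts) ∪
   (φ.pconsts.biUnion fun w => (σ.pc w).jconsts) ∪
   (φ.fvarJ.biUnion fun w => (σ.jv w).consts) ∪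
   (φ.jconsts.biUnion fun w => (σ.jc w).consts))

lemma pForced_eq (σ : Subst) (φ : Fm) : pForced σ φ = (pImg σ φ).sup Nat.succ := rfl
lemma jForced_eq (σ : Subst) (φ : Fm) : jForced σ φ = (jImg σ φ).sup Nat.succ := rfl

lemma lt_pForced {a : ℕ} {σ : Subst} {φ : Fm} (h : a ∈ pImg σ φ) : a < pForced σ φ :=
  Nat.lt_of_succ_le (Finset.le_sup (f := Nat.succ) h)

lemma lt_jForced {a : ℕ} {σ : Subst} {φ : Fm} (h : a ∈ jImg σ φ) : a < jForced σ φ :=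
  Nat.lt_of_succ_le (Finset.le_sup (f := Nat.succ) h)

lemma mem_pImg {a : ℕ} {σ : Subst} {φ : Fm} : a ∈ pImg σ φ ↔
    (∃ w ∈ φ.fvarP, a ∈ (σ.pv w).fvarP) ∨ (∃ w ∈ φ.pconsts, a ∈ (σ.pc w).fvarP) := by
  simp [pImg]

lemma mem_jImg {a : ℕ} {σ : Subst} {φ : Fm} : a ∈ jImg σ φ ↔
    (∃ w ∈ φ.fvarP, a ∈ (σ.pv w).fvarJ) ∨ (∃ w ∈ φ.pconsts, a ∈ (σ.pc w).fvarJ) ∨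
    (∃ w ∈ φ.fvarJ, a ∈ (σ.jv w).vars) ∨ (∃ w ∈ φ.jconsts, a ∈ (σ.jc w).vars) := by
  simp [jImg, or_assoc]

lemma mem_pcImg {a : ℕ} {σ : Subst} {φ : Fm} : a ∈ pcImg σ φ ↔
    (∃ w ∈ φ.fvarP, a ∈ (σ.pv w).pconsts) ∨ (∃ w ∈ φ.pconsts, a ∈ (σ.pc w).pconsts) := by
  simp [pcImg]

lemma mem_jcImg {a : ℕ} {σ : Subst} {φ : Fm} : a ∈ jcImg σ φ ↔
    (∃ w ∈ φ.fvarP, a ∈ (σ.pv w).jconsts) ∨ (∃ w ∈ φ.pconsts, a ∈ (σ.pc w).jconsts) ∨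
    (∃ w ∈ φ.fvarJ, a ∈ (σ.jv w).consts) ∨ (∃ w ∈ φ.jconsts, a ∈ (σ.jc w).consts) := by
  simp [jcImg, or_assoc]

lemma tm_subst_vars (t : Tm) (σ : Subst) :
    (t.subst σ).vars = (t.vars.biUnion fun w => (σ.jv w).vars) ∪
      (t.consts.biUnion fun w => (σ.jc w).vars) := by
  induction t with
  | var u => simp [Tm.subst, Tm.vars, Tm.consts]
  | const c => simp [Tm.subst, Tm.vars, Tm.consts]
  | app s t ihs iht => ext a; simp [Tm.subst, Tm.vars, Tm.consts, ihs, iht]; aesop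
  | plus s t ihs iht => ext a; simp [Tm.subst, Tm.vars, Tm.consts, ihs, iht]; aesop

lemma tm_subst_consts (t : Tm) (σ : Subst) :
    (t.subst σ).consts = (t.vars.biUnion fun w => (σ.jv w).consts) ∪
      (t.consts.biUnion fun w => (σ.jc w).consts) := by
  induction t with
  | var u => simp [Tm.subst, Tm.vars, Tm.consts]
  | const c => simp [Tm.subst, Tm.vars, Tm.consts]
  | app s t ihs iht => ext a; simp [Tm.subst, Tm.vars, Tm.consts, ihs, iht]; aesop
  | plus s t ihs iht => ext a; simp [Tm.subst, Tm.vars, Tm.consts, ihs, iht]; aesop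

lemma tm_subst_congr {t : Tm} {σ σ' : Subst}
    (h1 : ∀ w ∈ t.vars, σ.jv w = σ'.jv w) (h2 : ∀ c ∈ t.consts, σ.jc c = σ'.jc c) :
    t.subst σ = t.subst σ' := by
  induction t with
  | var u => exact h1 u (by simp [Tm.vars])
  | const c => exact h2 c (by simp [Tm.consts])
  | app s t ihs iht =>
      simp only [Tm.subst]
      rw [ihs (fun w hw => h1 w (by simp [Tm.vars, hw])) (fun c hc => h2 c (by simp [Tm.consts, hc])),
          iht (fun w hw => h1 w (by simp [Tm.vars, hw])) (fun c hc => h2 c (by simp [Tm.consts, hc]))]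
  | plus s t ihs iht =>
      simp only [Tm.subst]
      rw [ihs (fun w hw => h1 w (by simp [Tm.vars, hw])) (fun c hc => h2 c (by simp [Tm.consts, hc])),
          iht (fun w hw => h1 w (by simp [Tm.vars, hw])) (fun c hc => h2 c (by simp [Tm.consts, hc]))]

lemma tm_subst_comp (t : Tm) (σ τ : Subst) :
    (t.subst σ).subst τ = t.subst (σ.comp τ) := by
  induction t with
  | var u => rfl
  | const c => rfl
  | app s t ihs iht => simp [Tm.subst, ihs, iht]
  | plus s t ihs iht => simp [Tm.subst, ihs, iht]


lemma biUnion_union_left {β : Type*} [DecidableEq β] (s t : Finset ℕ) (f : ℕ → Finset β) :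
    (s ∪ t).biUnion f = s.biUnion f ∪ t.biUnion f := by
  ext a
  simp only [Finset.mem_biUnion, Finset.mem_union, or_and_right, exists_or]

@[simp] lemma updP_pv (σ : Subst) (x : ℕ) (e : Fm) : (σ.updP x e).pv = Function.update σ.pv x e := rfl
@[simp] lemma updP_jv (σ : Subst) (x : ℕ) (e : Fm) : (σ.updP x e).jv = σ.jv := rfl
@[simp] lemma updP_pc (σ : Subst) (x : ℕ) (e : Fm) : (σ.updP x e).pc = σ.pc := rfl
@[simp] lemma updP_jc (σ : Subst) (x : ℕ) (e : Fm) : (σ.updP x e).jc = σ.jc := rfl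
@[simp] lemma updJ_pv (σ : Subst) (u : ℕ) (t : Tm) : (σ.updJ u t).pv = σ.pv := rfl
@[simp] lemma updJ_jv (σ : Subst) (u : ℕ) (t : Tm) : (σ.updJ u t).jv = Function.update σ.jv u t := rfl
@[simp] lemma updJ_pc (σ : Subst) (u : ℕ) (t : Tm) : (σ.updJ u t).pc = σ.pc := rfl
@[simp] lemma updJ_jc (σ : Subst) (u : ℕ) (t : Tm) : (σ.updJ u t).jc = σ.jc := rfl

lemma subst_fAll (σ : Subst) (x : ℕ) (φ : Fm) :
    (Fm.fAll x φ).subst σ = .fAll (pForced σ (.fAll x φ))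
      (φ.subst (σ.updP x (.pvar (pForced σ (.fAll x φ))))) := rfl

lemma subst_jAll (σ : Subst) (u : ℕ) (φ : Fm) :
    (Fm.jAll u φ).subst σ = .jAll (jForced σ (.jAll u φ))
      (φ.subst (σ.updJ u (.var (jForced σ (.jAll u φ))))) := rfl

theorem subst_vars (φ : Fm) : ∀ σ : Subst,
    (φ.subst σ).fvarP = pImg σ φ ∧ (φ.subst σ).fvarJ = jImg σ φ ∧
    (φ.subst σ).pconsts = pcImg σ φ ∧ (φ.subst σ).jconsts = jcImg σ φ := by
  have step : ∀ (σ : Subst) (χ φ ψ : Fm), χ.fvarP = φ.fvarP ∪ ψ.fvarP →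
      χ.fvarJ = φ.fvarJ ∪ ψ.fvarJ → χ.pconsts = φ.pconsts ∪ ψ.pconsts →
      χ.jconsts = φ.jconsts ∪ ψ.jconsts →
      pImg σ χ = pImg σ φ ∪ pImg σ ψ ∧ jImg σ χ = jImg σ φ ∪ jImg σ ψ ∧
      pcImg σ χ = pcImg σ φ ∪ pcImg σ ψ ∧ jcImg σ χ = jcImg σ φ ∪ jcImg σ ψ := by
    intro σ χ φ ψ h1 h2 h3 h4
    refine ⟨?_,?_,?_,?_⟩ <;>
      simp only [pImg, jImg, pcImg, jcImg, h1, h2, h3, h4, biUnion_union_left] <;>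
      (ext a; simp only [Finset.mem_union]; tauto)
  induction φ with
  | pvar x =>
      intro σ
      refine ⟨?_,?_,?_,?_⟩ <;>
        simp [Fm.subst, pImg, jImg, pcImg, jcImg, Fm.fvarP, Fm.fvarJ, Fm.pconsts, Fm.jconsts]
  | pconst d =>
      intro σ
      refine ⟨?_,?_,?_,?_⟩ <;>
        simp [Fm.subst, pImg, jImg, pcImg, jcImg, Fm.fvarP, Fm.fvarJ, Fm.pconsts, Fm.jconsts]
  | imp φ ψ ih1 ih2 =>
      intro σ
      obtain ⟨a1,a2,a3,a4⟩ := ih1 σ; obtain ⟨b1,b2,b3,b4⟩ := ih2 σ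
      obtain ⟨s1,s2,s3,s4⟩ := step σ (.imp φ ψ) φ ψ rfl rfl rfl rfl
      exact ⟨by simp only [Fm.subst, Fm.fvarP, a1, b1, s1],
             by simp only [Fm.subst, Fm.fvarJ, a2, b2, s2],
             by simp only [Fm.subst, Fm.pconsts, a3, b3, s3],
             by simp only [Fm.subst, Fm.jconsts, a4, b4, s4]⟩
  | neg φ ih =>
      intro σ
      obtain ⟨a1,a2,a3,a4⟩ := ih σ
      exact ⟨by exact a1,
             by exact a2,
             by exact a3,
             by exact a4⟩
  | ideq φ ψ ih1 ih2 =>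
      intro σ
      obtain ⟨a1,a2,a3,a4⟩ := ih1 σ; obtain ⟨b1,b2,b3,b4⟩ := ih2 σ
      obtain ⟨s1,s2,s3,s4⟩ := step σ (.ideq φ ψ) φ ψ rfl rfl rfl rfl
      exact ⟨by simp only [Fm.subst, Fm.fvarP, a1, b1, s1],
             by simp only [Fm.subst, Fm.fvarJ, a2, b2, s2],
             by simp only [Fm.subst, Fm.pconsts, a3, b3, s3],
             by simp only [Fm.subst, Fm.jconsts, a4, b4, s4]⟩
  | ref φ ψ ih1 ih2 =>
      intro σ
      obtain ⟨a1,a2,a3,a4⟩ := ih1 σ; obtain ⟨b1,b2,b3,b4⟩ := ih2 σ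
      obtain ⟨s1,s2,s3,s4⟩ := step σ (.ref φ ψ) φ ψ rfl rfl rfl rfl
      exact ⟨by simp only [Fm.subst, Fm.fvarP, a1, b1, s1],
             by simp only [Fm.subst, Fm.fvarJ, a2, b2, s2],
             by simp only [Fm.subst, Fm.pconsts, a3, b3, s3],
             by simp only [Fm.subst, Fm.jconsts, a4, b4, s4]⟩
  | teq s t =>
      intro σ
      refine ⟨?_,?_,?_,?_⟩ <;>
        simp only [Fm.subst, Fm.fvarP, Fm.fvarJ, Fm.pconsts, Fm.jconsts,
          tm_subst_vars, tm_subst_consts, pImg, jImg, pcImg, jcImg,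
          biUnion_union_left, Finset.biUnion_empty] <;>
        (ext a; simp only [Finset.mem_union, Finset.notMem_empty]; tauto)
  | tle s t =>
      intro σ
      refine ⟨?_,?_,?_,?_⟩ <;>
        simp only [Fm.subst, Fm.fvarP, Fm.fvarJ, Fm.pconsts, Fm.jconsts,
          tm_subst_vars, tm_subst_consts, pImg, jImg, pcImg, jcImg,
          biUnion_union_left, Finset.biUnion_empty] <;>
        (ext a; simp only [Finset.mem_union, Finset.notMem_empty]; tauto)
  | isTrue φ ih =>
      intro σ
      obtain ⟨a1,a2,a3,a4⟩ := ih σ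
      exact ⟨by exact a1,
             by exact a2,
             by exact a3,
             by exact a4⟩
  | isFalse φ ih =>
      intro σ
      obtain ⟨a1,a2,a3,a4⟩ := ih σ
      exact ⟨by exact a1,
             by exact a2,
             by exact a3,
             by exact a4⟩
  | box φ ih =>
      intro σ
      obtain ⟨a1,a2,a3,a4⟩ := ih σ
      exact ⟨by exact a1,
             by exact a2,
             by exact a3,
             by exact a4⟩
  | just φ t ih =>
      intro σ
      obtain ⟨a1,a2,a3,a4⟩ := ih σ
      refine ⟨?_,?_,?_,?_⟩ <;>
        simp only [Fm.subst, Fm.fvarP, Fm.fvarJ, Fm.pconsts, Fm.jconsts, a1, a2, a3, a4,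
          tm_subst_vars, tm_subst_consts, pImg, jImg, pcImg, jcImg,
          biUnion_union_left, Finset.biUnion_empty] <;>
        (ext a; simp only [Finset.mem_union, Finset.notMem_empty]; tauto)
  | fAll x φ ih =>
      intro σ
      set y := pForced σ (.fAll x φ) with hy
      set σ' := σ.updP x (.pvar y) with hσ'
      obtain ⟨a1,a2,a3,a4⟩ := ih σ'
      rw [subst_fAll]
      refine ⟨?_,?_,?_,?_⟩
      · -- fvarP with freshness
        show (Fm.fvarP (φ.subst σ')).erase y = _
        rw [a1]; ext a
        simp only [Finset.mem_erase, mem_pImg]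
        constructor
        · rintro ⟨hne, (⟨w, hw, ha⟩ | ⟨w, hw, ha⟩)⟩
          · by_cases hwx : w = x
            · subst hwx
              simp only [hσ', updP_pv, Function.update_self, Fm.fvarP, Finset.mem_singleton] at ha
              exact absurd ha hne
            · rw [hσ'] at ha
              simp only [updP_pv, Function.update_of_ne hwx] at ha
              exact Or.inl ⟨w, by simp [Fm.fvarP, Finset.mem_erase, hwx, hw], ha⟩
          · rw [hσ'] at ha
            exact Or.inr ⟨w, by simpa [Fm.pconsts] using hw, ha⟩
        · intro h
          have hane : a ≠ y := Nat.ne_of_lt (lt_pForced (mem_pImg.2 h))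
          refine ⟨hane, ?_⟩
          rcases h with ⟨w, hw, ha⟩ | ⟨w, hw, ha⟩
          · simp only [Fm.fvarP, Finset.mem_erase] at hw
            exact Or.inl ⟨w, hw.2, by rw [hσ']; simpa [Function.update_of_ne hw.1] using ha⟩
          · simp only [Fm.pconsts] at hw
            exact Or.inr ⟨w, hw, by rw [hσ']; simpa using ha⟩
      · show Fm.fvarJ (φ.subst σ') = _
        rw [a2]; ext a
        simp only [mem_jImg, hσ', updP_pv, updP_jv, updP_pc, updP_jc, Function.update_apply,
          Fm.fvarP, Fm.fvarJ, Fm.pconsts, Fm.jconsts, Finset.mem_erase]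
        constructor
        · rintro (⟨w, hw, ha⟩ | h | h | h)
          · by_cases hwx : w = x
            · simp [hwx, Fm.fvarJ] at ha
            · exact Or.inl ⟨w, ⟨hwx, hw⟩, by simpa [hwx] using ha⟩
          · exact Or.inr (Or.inl h)
          · exact Or.inr (Or.inr (Or.inl h))
          · exact Or.inr (Or.inr (Or.inr h))
        · rintro (⟨w, ⟨hwx, hw⟩, ha⟩ | h | h | h)
          · exact Or.inl ⟨w, hw, by simpa [hwx] using ha⟩
          · exact Or.inr (Or.inl h)
          · exact Or.inr (Or.inr (Or.inl h))
          · exact Or.inr (Or.inr (Or.inr h))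
      · show Fm.pconsts (φ.subst σ') = _
        rw [a3]; ext a
        simp only [mem_pcImg, hσ', updP_pv, updP_pc, Function.update_apply,
          Fm.fvarP, Fm.pconsts, Finset.mem_erase]
        constructor
        · rintro (⟨w, hw, ha⟩ | h)
          · by_cases hwx : w = x
            · simp [hwx, Fm.pconsts] at ha
            · exact Or.inl ⟨w, ⟨hwx, hw⟩, by simpa [hwx] using ha⟩
          · exact Or.inr h
        · rintro (⟨w, ⟨hwx, hw⟩, ha⟩ | h)
          · exact Or.inl ⟨w, hw, by simpa [hwx] using ha⟩
          · exact Or.inr h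
      · show Fm.jconsts (φ.subst σ') = _
        rw [a4]; ext a
        simp only [mem_jcImg, hσ', updP_pv, updP_jv, updP_pc, updP_jc, Function.update_apply,
          Fm.fvarP, Fm.fvarJ, Fm.pconsts, Fm.jconsts, Finset.mem_erase]
        constructor
        · rintro (⟨w, hw, ha⟩ | h | h | h)
          · by_cases hwx : w = x
            · simp [hwx, Fm.jconsts] at ha
            · exact Or.inl ⟨w, ⟨hwx, hw⟩, by simpa [hwx] using ha⟩
          · exact Or.inr (Or.inl h)
          · exact Or.inr (Or.inr (Or.inl h))
          · exact Or.inr (Or.inr (Or.inr h))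
        · rintro (⟨w, ⟨hwx, hw⟩, ha⟩ | h | h | h)
          · exact Or.inl ⟨w, hw, by simpa [hwx] using ha⟩
          · exact Or.inr (Or.inl h)
          · exact Or.inr (Or.inr (Or.inl h))
          · exact Or.inr (Or.inr (Or.inr h))
  | jAll u φ ih =>
      intro σ
      set v := jForced σ (.jAll u φ) with hv
      set σ' := σ.updJ u (.var v) with hσ'
      obtain ⟨a1,a2,a3,a4⟩ := ih σ'
      rw [subst_jAll]
      refine ⟨?_,?_,?_,?_⟩
      · show Fm.fvarP (φ.subst σ') = _
        rw [a1]; ext a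
        simp only [mem_pImg, hσ', updJ_pv, updJ_pc, Fm.fvarP, Fm.pconsts]
      · -- fvarJ with freshness
        show (Fm.fvarJ (φ.subst σ')).erase v = _
        rw [a2]; ext a
        simp only [Finset.mem_erase, mem_jImg, hσ', updJ_pv, updJ_jv, updJ_pc, updJ_jc,
          Function.update_apply, Fm.fvarP, Fm.fvarJ, Fm.pconsts, Fm.jconsts, Finset.mem_erase]
        constructor
        · rintro ⟨hne, (h | h | ⟨w, hw, ha⟩ | h)⟩
          · exact Or.inl h
          · exact Or.inr (Or.inl h)
          · by_cases hwu : w = u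
            · simp only [hwu, if_pos rfl, if_true, Tm.vars, Finset.mem_singleton] at ha
              exact absurd ha hne
            · exact Or.inr (Or.inr (Or.inl ⟨w, ⟨hwu, hw⟩, by simpa [hwu] using ha⟩))
          · exact Or.inr (Or.inr (Or.inr h))
        · intro h
          have hane : a ≠ v := Nat.ne_of_lt (lt_jForced (by
            refine mem_jImg.2 ?_
            simpa only [Fm.fvarP, Fm.fvarJ, Fm.pconsts, Fm.jconsts, Finset.mem_erase] using h))
          refine ⟨hane, ?_⟩
          rcases h with h | h | ⟨w, ⟨hwu, hw⟩, ha⟩ | h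
          · exact Or.inl h
          · exact Or.inr (Or.inl h)
          · exact Or.inr (Or.inr (Or.inl ⟨w, hw, by simpa [hwu] using ha⟩))
          · exact Or.inr (Or.inr (Or.inr h))
      · show Fm.pconsts (φ.subst σ') = _
        rw [a3]; ext a
        simp only [mem_pcImg, hσ', updJ_pv, updJ_pc, Fm.fvarP, Fm.pconsts]
      · show Fm.jconsts (φ.subst σ') = _
        rw [a4]; ext a
        simp only [mem_jcImg, hσ', updJ_pv, updJ_jv, updJ_pc, updJ_jc, Function.update_apply,
          Fm.fvarP, Fm.fvarJ, Fm.pconsts, Fm.jconsts, Finset.mem_erase]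
        constructor
        · rintro (h | h | ⟨w, hw, ha⟩ | h)
          · exact Or.inl h
          · exact Or.inr (Or.inl h)
          · by_cases hwu : w = u
            · simp [hwu, Tm.consts] at ha
            · exact Or.inr (Or.inr (Or.inl ⟨w, ⟨hwu, hw⟩, by simpa [hwu] using ha⟩))
          · exact Or.inr (Or.inr (Or.inr h))
        · rintro (h | h | ⟨w, ⟨hwu, hw⟩, ha⟩ | h)
          · exact Or.inl h
          · exact Or.inr (Or.inl h)
          · exact Or.inr (Or.inr (Or.inl ⟨w, hw, by simpa [hwu] using ha⟩))
          · exact Or.inr (Or.inr (Or.inr h))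

lemma subst_fvarP (φ : Fm) (σ : Subst) : (φ.subst σ).fvarP = pImg σ φ := (subst_vars φ σ).1
lemma subst_fvarJ (φ : Fm) (σ : Subst) : (φ.subst σ).fvarJ = jImg σ φ := (subst_vars φ σ).2.1
lemma subst_pconsts (φ : Fm) (σ : Subst) : (φ.subst σ).pconsts = pcImg σ φ := (subst_vars φ σ).2.2.1
lemma subst_jconsts (φ : Fm) (σ : Subst) : (φ.subst σ).jconsts = jcImg σ φ := (subst_vars φ σ).2.2.2

@[simp] lemma comp_pv (σ τ : Subst) (x : ℕ) : (σ.comp τ).pv x = (σ.pv x).subst τ := rfl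
@[simp] lemma comp_jv (σ τ : Subst) (u : ℕ) : (σ.comp τ).jv u = (σ.jv u).subst τ := rfl
@[simp] lemma comp_pc (σ τ : Subst) (d : ℕ) : (σ.comp τ).pc d = (σ.pc d).subst τ := rfl
@[simp] lemma comp_jc (σ τ : Subst) (c : ℕ) : (σ.comp τ).jc c = (σ.jc c).subst τ := rfl

lemma pImg_congr {σ : Subst} {χ χ' : Fm} (h1 : χ.fvarP = χ'.fvarP)
    (h2 : χ.pconsts = χ'.pconsts) : pImg σ χ = pImg σ χ' := by
  unfold pImg; rw [h1, h2]

lemma jImg_congr {σ : Subst} {χ χ' : Fm} (h1 : χ.fvarP = χ'.fvarP)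
    (h2 : χ.pconsts = χ'.pconsts) (h3 : χ.fvarJ = χ'.fvarJ)
    (h4 : χ.jconsts = χ'.jconsts) : jImg σ χ = jImg σ χ' := by
  unfold jImg; rw [h1, h2, h3, h4]

lemma pForced_congr {σ : Subst} {χ χ' : Fm} (h1 : χ.fvarP = χ'.fvarP)
    (h2 : χ.pconsts = χ'.pconsts) : pForced σ χ = pForced σ χ' := by
  rw [pForced_eq, pForced_eq, pImg_congr h1 h2]

lemma jForced_congr {σ : Subst} {χ χ' : Fm} (h1 : χ.fvarP = χ'.fvarP)
    (h2 : χ.pconsts = χ'.pconsts) (h3 : χ.fvarJ = χ'.fvarJ)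
    (h4 : χ.jconsts = χ'.jconsts) : jForced σ χ = jForced σ χ' := by
  rw [jForced_eq, jForced_eq, jImg_congr h1 h2 h3 h4]

/-- extensionality of substitution -/
theorem subst_congr : ∀ (φ : Fm) (σ σ' : Subst),
    (∀ x ∈ φ.fvarP, σ.pv x = σ'.pv x) → (∀ u ∈ φ.fvarJ, σ.jv u = σ'.jv u) →
    (∀ d ∈ φ.pconsts, σ.pc d = σ'.pc d) → (∀ c ∈ φ.jconsts, σ.jc c = σ'.jc c) →
    φ.subst σ = φ.subst σ' := by
  intro φ
  induction φ with
  | pvar x => intro σ σ' h1 _ _ _; exact h1 x (by simp [Fm.fvarP])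
  | pconst d => intro σ σ' _ _ h3 _; exact h3 d (by simp [Fm.pconsts])
  | imp φ ψ ih1 ih2 =>
      intro σ σ' h1 h2 h3 h4
      simp only [Fm.subst]
      rw [ih1 σ σ' (fun x hx => h1 x (by simp [Fm.fvarP, hx])) (fun u hu => h2 u (by simp [Fm.fvarJ, hu]))
            (fun d hd => h3 d (by simp [Fm.pconsts, hd])) (fun c hc => h4 c (by simp [Fm.jconsts, hc])),
          ih2 σ σ' (fun x hx => h1 x (by simp [Fm.fvarP, hx])) (fun u hu => h2 u (by simp [Fm.fvarJ, hu]))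
            (fun d hd => h3 d (by simp [Fm.pconsts, hd])) (fun c hc => h4 c (by simp [Fm.jconsts, hc]))]
  | neg φ ih =>
      intro σ σ' h1 h2 h3 h4
      simp only [Fm.subst]
      rw [ih σ σ' h1 h2 h3 h4]
  | ideq φ ψ ih1 ih2 =>
      intro σ σ' h1 h2 h3 h4
      simp only [Fm.subst]
      rw [ih1 σ σ' (fun x hx => h1 x (by simp [Fm.fvarP, hx])) (fun u hu => h2 u (by simp [Fm.fvarJ, hu]))
            (fun d hd => h3 d (by simp [Fm.pconsts, hd])) (fun c hc => h4 c (by simp [Fm.jconsts, hc])),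
          ih2 σ σ' (fun x hx => h1 x (by simp [Fm.fvarP, hx])) (fun u hu => h2 u (by simp [Fm.fvarJ, hu]))
            (fun d hd => h3 d (by simp [Fm.pconsts, hd])) (fun c hc => h4 c (by simp [Fm.jconsts, hc]))]
  | ref φ ψ ih1 ih2 =>
      intro σ σ' h1 h2 h3 h4
      simp only [Fm.subst]
      rw [ih1 σ σ' (fun x hx => h1 x (by simp [Fm.fvarP, hx])) (fun u hu => h2 u (by simp [Fm.fvarJ, hu]))
            (fun d hd => h3 d (by simp [Fm.pconsts, hd])) (fun c hc => h4 c (by simp [Fm.jconsts, hc])),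
          ih2 σ σ' (fun x hx => h1 x (by simp [Fm.fvarP, hx])) (fun u hu => h2 u (by simp [Fm.fvarJ, hu]))
            (fun d hd => h3 d (by simp [Fm.pconsts, hd])) (fun c hc => h4 c (by simp [Fm.jconsts, hc]))]
  | teq s t =>
      intro σ σ' _ h2 _ h4
      simp only [Fm.subst]
      rw [tm_subst_congr (fun w hw => h2 w (by simp [Fm.fvarJ, hw])) (fun c hc => h4 c (by simp [Fm.jconsts, hc])),
          tm_subst_congr (σ := σ) (σ' := σ') (t := t) (fun w hw => h2 w (by simp [Fm.fvarJ, hw]))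
            (fun c hc => h4 c (by simp [Fm.jconsts, hc]))]
  | tle s t =>
      intro σ σ' _ h2 _ h4
      simp only [Fm.subst]
      rw [tm_subst_congr (fun w hw => h2 w (by simp [Fm.fvarJ, hw])) (fun c hc => h4 c (by simp [Fm.jconsts, hc])),
          tm_subst_congr (σ := σ) (σ' := σ') (t := t) (fun w hw => h2 w (by simp [Fm.fvarJ, hw]))
            (fun c hc => h4 c (by simp [Fm.jconsts, hc]))]
  | isTrue φ ih =>
      intro σ σ' h1 h2 h3 h4; simp only [Fm.subst]; rw [ih σ σ' h1 h2 h3 h4]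
  | isFalse φ ih =>
      intro σ σ' h1 h2 h3 h4; simp only [Fm.subst]; rw [ih σ σ' h1 h2 h3 h4]
  | box φ ih =>
      intro σ σ' h1 h2 h3 h4; simp only [Fm.subst]; rw [ih σ σ' h1 h2 h3 h4]
  | just φ t ih =>
      intro σ σ' h1 h2 h3 h4
      simp only [Fm.subst]
      rw [ih σ σ' h1 (fun u hu => h2 u (by simp [Fm.fvarJ, hu])) h3 (fun c hc => h4 c (by simp [Fm.jconsts, hc])),
          tm_subst_congr (σ := σ) (σ' := σ') (t := t) (fun w hw => h2 w (by simp [Fm.fvarJ, hw]))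
            (fun c hc => h4 c (by simp [Fm.jconsts, hc]))]
  | fAll x φ ih =>
      intro σ σ' h1 h2 h3 h4
      have hy : pForced σ (.fAll x φ) = pForced σ' (.fAll x φ) := by
        rw [pForced_eq, pForced_eq]; congr 1
        unfold pImg
        refine congrArg₂ (· ∪ ·) ?_ ?_
        · exact Finset.biUnion_congr rfl (fun w hw => by rw [h1 w hw])
        · exact Finset.biUnion_congr rfl (fun w hw => by rw [h3 w hw])
      rw [subst_fAll, subst_fAll, hy]
      congr 1
      apply ih
      · intro w hw
        simp only [updP_pv, Function.update_apply]
        by_cases hwx : w = x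
        · simp [hwx]
        · simp only [if_neg hwx]
          exact h1 w (by simp [Fm.fvarP, Finset.mem_erase, hwx, hw])
      · intro w hw; exact h2 w (by simpa [Fm.fvarJ] using hw)
      · intro w hw; exact h3 w (by simpa [Fm.pconsts] using hw)
      · intro w hw; exact h4 w (by simpa [Fm.jconsts] using hw)
  | jAll u φ ih =>
      intro σ σ' h1 h2 h3 h4
      have hv : jForced σ (.jAll u φ) = jForced σ' (.jAll u φ) := by
        rw [jForced_eq, jForced_eq]; congr 1
        unfold jImg
        refine congrArg₂ (· ∪ ·) (congrArg₂ (· ∪ ·) (congrArg₂ (· ∪ ·) ?_ ?_) ?_) ?_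
        · exact Finset.biUnion_congr rfl (fun w hw => by rw [h1 w hw])
        · exact Finset.biUnion_congr rfl (fun w hw => by rw [h3 w hw])
        · exact Finset.biUnion_congr rfl (fun w hw => by rw [h2 w hw])
        · exact Finset.biUnion_congr rfl (fun w hw => by rw [h4 w hw])
      rw [subst_jAll, subst_jAll, hv]
      congr 1
      apply ih
      · intro w hw; exact h1 w (by simpa [Fm.fvarP] using hw)
      · intro w hw
        simp only [updJ_jv, Function.update_apply]
        by_cases hwu : w = u
        · simp [hwu]
        · simp only [if_neg hwu]
          exact h2 w (by simp [Fm.fvarJ, Finset.mem_erase, hwu, hw])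
      · intro w hw; exact h3 w (by simpa [Fm.pconsts] using hw)
      · intro w hw; exact h4 w (by simpa [Fm.jconsts] using hw)

lemma swap_ex {s : Finset ℕ} {t : ℕ → Finset ℕ} {p : ℕ → Prop} :
    (∃ w, w ∈ s ∧ ∃ z, z ∈ t w ∧ p z) ↔ (∃ z, (∃ w, w ∈ s ∧ z ∈ t w) ∧ p z) := by
  constructor
  · rintro ⟨w, hw, z, hz, hp⟩; exact ⟨z, ⟨w, hw, hz⟩, hp⟩
  · rintro ⟨z, ⟨w, hw, hz⟩, hp⟩; exact ⟨w, hw, z, hz, hp⟩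

lemma pImg_comp (σ τ : Subst) (χ : Fm) :
    pImg (σ.comp τ) χ = (pImg σ χ).biUnion (fun w => (τ.pv w).fvarP) ∪
      (pcImg σ χ).biUnion (fun w => (τ.pc w).fvarP) := by
  ext a
  simp only [Finset.mem_union, Finset.mem_biUnion, mem_pImg, mem_pcImg, comp_pv, comp_pc,
    subst_fvarP, and_or_left, or_and_right, exists_or, or_assoc, swap_ex]
  itauto

lemma jImg_comp (σ τ : Subst) (χ : Fm) :
    jImg (σ.comp τ) χ = (pImg σ χ).biUnion (fun w => (τ.pv w).fvarJ) ∪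
      (pcImg σ χ).biUnion (fun w => (τ.pc w).fvarJ) ∪
      (jImg σ χ).biUnion (fun w => (τ.jv w).vars) ∪
      (jcImg σ χ).biUnion (fun w => (τ.jc w).vars) := by
  ext a
  simp only [Finset.mem_union, Finset.mem_biUnion, mem_jImg, mem_pImg, mem_pcImg, mem_jcImg,
    comp_pv, comp_jv, comp_pc, comp_jc, subst_fvarJ, tm_subst_vars,
    and_or_left, or_and_right, exists_or, or_assoc, swap_ex]
  itauto

lemma pForced_comp (σ τ : Subst) (χ : Fm) :
    pForced τ (χ.subst σ) = pForced (σ.comp τ) χ := by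
  rw [pForced_eq, pForced_eq, pImg_comp]
  congr 1
  rw [show pImg τ (χ.subst σ) = (((χ.subst σ).fvarP).biUnion fun w => (τ.pv w).fvarP) ∪
      (((χ.subst σ).pconsts).biUnion fun w => (τ.pc w).fvarP) from rfl,
    subst_fvarP, subst_pconsts]

lemma jForced_comp (σ τ : Subst) (χ : Fm) :
    jForced τ (χ.subst σ) = jForced (σ.comp τ) χ := by
  rw [jForced_eq, jForced_eq, jImg_comp]
  congr 1
  rw [show jImg τ (χ.subst σ) = (((χ.subst σ).fvarP).biUnion fun w => (τ.pv w).fvarJ) ∪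
      (((χ.subst σ).pconsts).biUnion fun w => (τ.pc w).fvarJ) ∪
      (((χ.subst σ).fvarJ).biUnion fun w => (τ.jv w).vars) ∪
      (((χ.subst σ).jconsts).biUnion fun w => (τ.jc w).vars) from rfl,
    subst_fvarP, subst_pconsts, subst_fvarJ, subst_jconsts]

/-- composition law for capture-avoiding substitution -/
theorem subst_comp : ∀ (φ : Fm) (σ τ : Subst),
    (φ.subst σ).subst τ = φ.subst (σ.comp τ) := by
  intro φ
  induction φ with
  | pvar x => intro σ τ; rfl
  | pconst d => intro σ τ; rfl
  | imp φ ψ ih1 ih2 => intro σ τ; simp only [Fm.subst, ih1, ih2]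
  | neg φ ih => intro σ τ; simp only [Fm.subst, ih]
  | ideq φ ψ ih1 ih2 => intro σ τ; simp only [Fm.subst, ih1, ih2]
  | ref φ ψ ih1 ih2 => intro σ τ; simp only [Fm.subst, ih1, ih2]
  | teq s t => intro σ τ; simp only [Fm.subst, tm_subst_comp]
  | tle s t => intro σ τ; simp only [Fm.subst, tm_subst_comp]
  | isTrue φ ih => intro σ τ; simp only [Fm.subst, ih]
  | isFalse φ ih => intro σ τ; simp only [Fm.subst, ih]
  | box φ ih => intro σ τ; simp only [Fm.subst, ih]
  | just φ t ih => intro σ τ; simp only [Fm.subst, ih, tm_subst_comp]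
  | fAll x φ ih =>
      intro σ τ
      rw [subst_fAll σ x φ]
      rw [subst_fAll τ]
      rw [subst_fAll (σ.comp τ)]
      have hy2 : pForced τ (.fAll (pForced σ (.fAll x φ))
          (φ.subst (σ.updP x (.pvar (pForced σ (.fAll x φ)))))) =
          pForced (σ.comp τ) (.fAll x φ) := by
        rw [show Fm.fAll (pForced σ (.fAll x φ))
            (φ.subst (σ.updP x (.pvar (pForced σ (.fAll x φ))))) =
            (Fm.fAll x φ).subst σ from rfl, pForced_comp]
      rw [hy2]
      congr 1
      rw [ih]
      apply subst_congr
      · intro w hw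
        by_cases hwx : w = x
        · subst hwx
          simp [Subst.updP, Fm.subst, Function.update_self]
        · simp only [comp_pv, updP_pv, Function.update_of_ne hwx]
          apply subst_congr
          · intro z hz
            have hzy : z ≠ pForced σ (.fAll x φ) :=
              Nat.ne_of_lt (lt_pForced (mem_pImg.2 (Or.inl
                ⟨w, by simp [Fm.fvarP, Finset.mem_erase, hwx, hw], hz⟩)))
            simp [Function.update_of_ne hzy]
          · intro z _; rfl
          · intro z _; rfl
          · intro z _; rfl
      · intro w _
        exact tm_subst_congr (fun _ _ => rfl) (fun _ _ => rfl)
      · intro d hd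
        simp only [comp_pc, updP_pc]
        apply subst_congr
        · intro z hz
          have hzy : z ≠ pForced σ (.fAll x φ) :=
            Nat.ne_of_lt (lt_pForced (mem_pImg.2 (Or.inr ⟨d, by simpa [Fm.pconsts] using hd, hz⟩)))
          simp [Function.update_of_ne hzy]
        · intro z _; rfl
        · intro z _; rfl
        · intro z _; rfl
      · intro c _
        exact tm_subst_congr (fun _ _ => rfl) (fun _ _ => rfl)
  | jAll u φ ih =>
      intro σ τ
      rw [subst_jAll σ u φ]
      rw [subst_jAll τ]
      rw [subst_jAll (σ.comp τ)]
      have hy2 : jForced τ (.jAll (jForced σ (.jAll u φ))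
          (φ.subst (σ.updJ u (.var (jForced σ (.jAll u φ)))))) =
          jForced (σ.comp τ) (.jAll u φ) := by
        rw [show Fm.jAll (jForced σ (.jAll u φ))
            (φ.subst (σ.updJ u (.var (jForced σ (.jAll u φ))))) =
            (Fm.jAll u φ).subst σ from rfl, jForced_comp]
      rw [hy2]
      congr 1
      rw [ih]
      apply subst_congr
      · intro w hw
        simp only [comp_pv, updJ_pv]
        apply subst_congr
        · intro z _; rfl
        · intro z hz
          have hzv : z ≠ jForced σ (.jAll u φ) :=
            Nat.ne_of_lt (lt_jForced (mem_jImg.2 (Or.inl ⟨w, by simpa [Fm.fvarP] using hw, hz⟩)))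
          simp [Function.update_of_ne hzv]
        · intro z _; rfl
        · intro z _; rfl
      · intro w hw
        by_cases hwu : w = u
        · subst hwu
          simp [Subst.updJ, Tm.subst, Function.update_self]
        · simp only [comp_jv, updJ_jv, Function.update_of_ne hwu]
          apply tm_subst_congr
          · intro z hz
            have hzv : z ≠ jForced σ (.jAll u φ) :=
              Nat.ne_of_lt (lt_jForced (mem_jImg.2 (Or.inr (Or.inr (Or.inl
                ⟨w, by simp [Fm.fvarJ, Finset.mem_erase, hwu, hw], hz⟩)))))
            simp [Function.update_of_ne hzv]
          · intro z _; rfl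
      · intro d hd
        simp only [comp_pc, updJ_pc]
        apply subst_congr
        · intro z _; rfl
        · intro z hz
          have hzv : z ≠ jForced σ (.jAll u φ) :=
            Nat.ne_of_lt (lt_jForced (mem_jImg.2 (Or.inr (Or.inl
              ⟨d, by simpa [Fm.pconsts] using hd, hz⟩))))
          simp [Function.update_of_ne hzv]
        · intro z _; rfl
        · intro z _; rfl
      · intro c hc
        apply tm_subst_congr
        · intro z hz
          have hzv : z ≠ jForced σ (.jAll u φ) :=
            Nat.ne_of_lt (lt_jForced (mem_jImg.2 (Or.inr (Or.inr (Or.inr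
              ⟨c, by simpa [Fm.jconsts] using hc, hz⟩)))))
          simp [Function.update_of_ne hzv]
        · intro z _; rfl

@[simp] lemma id_pv : Subst.id.pv = Fm.pvar := rfl
@[simp] lemma id_jv : Subst.id.jv = Tm.var := rfl
@[simp] lemma id_pc : Subst.id.pc = Fm.pconst := rfl
@[simp] lemma id_jc : Subst.id.jc = Tm.const := rfl

lemma tm_subst_id (t : Tm) : t.subst Subst.id = t := by
  induction t with
  | var u => rfl
  | const c => rfl
  | app s t ihs iht => simp only [Tm.subst, ihs, iht]
  | plus s t ihs iht => simp only [Tm.subst, ihs, iht]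

lemma subst_id_fvarP (φ : Fm) : (φ.subst Subst.id).fvarP = φ.fvarP := by
  rw [subst_fvarP]; ext a
  simp [mem_pImg, Fm.fvarP]

lemma subst_id_fvarJ (φ : Fm) : (φ.subst Subst.id).fvarJ = φ.fvarJ := by
  rw [subst_fvarJ]; ext a
  simp [mem_jImg, Fm.fvarJ, Tm.vars]

lemma subst_id_pconsts (φ : Fm) : (φ.subst Subst.id).pconsts = φ.pconsts := by
  rw [subst_pconsts]; ext a
  simp [mem_pcImg, Fm.pconsts]

lemma subst_id_jconsts (φ : Fm) : (φ.subst Subst.id).jconsts = φ.jconsts := by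
  rw [subst_jconsts]; ext a
  simp [mem_jcImg, Fm.jconsts, Tm.consts]

lemma upd_var_vars (v u : ℕ) : ∀ w, (Function.update Tm.var v (Tm.var u) w).vars =
    if w = v then {u} else {w} := by
  intro w
  rw [Function.update_apply]
  by_cases h : w = v <;> simp [h, Tm.vars]

lemma upd_var_consts (v u : ℕ) : ∀ w, (Function.update Tm.var v (Tm.var u) w).consts = ∅ := by
  intro w
  rw [Function.update_apply]
  by_cases h : w = v <;> simp [h, Tm.consts]

lemma upd_pvar_fvarP (y x : ℕ) : ∀ w, (Function.update Fm.pvar y (Fm.pvar x) w).fvarP =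
    if w = y then {x} else {w} := by
  intro w
  rw [Function.update_apply]
  by_cases h : w = y <;> simp [h, Fm.fvarP]

lemma upd_pvar_fvarJ (y x : ℕ) : ∀ w, (Function.update Fm.pvar y (Fm.pvar x) w).fvarJ = ∅ := by
  intro w
  rw [Function.update_apply]
  by_cases h : w = y <;> simp [h, Fm.fvarJ]

lemma upd_pvar_pconsts (y x : ℕ) : ∀ w, (Function.update Fm.pvar y (Fm.pvar x) w).pconsts = ∅ := by
  intro w
  rw [Function.update_apply]
  by_cases h : w = y <;> simp [h, Fm.pconsts]

lemma upd_pvar_jconsts (y x : ℕ) : ∀ w, (Function.update Fm.pvar y (Fm.pvar x) w).jconsts = ∅ := by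
  intro w
  rw [Function.update_apply]
  by_cases h : w = y <;> simp [h, Fm.jconsts]

lemma subst1J_fvarP (ψ : Fm) (v u : ℕ) : (ψ.subst1J v (.var u)).fvarP = ψ.fvarP := by
  show (ψ.subst (Subst.id.updJ v (.var u))).fvarP = _
  rw [subst_fvarP]; ext a
  simp [mem_pImg, Fm.fvarP]

lemma subst1J_pconsts (ψ : Fm) (v u : ℕ) : (ψ.subst1J v (.var u)).pconsts = ψ.pconsts := by
  show (ψ.subst (Subst.id.updJ v (.var u))).pconsts = _
  rw [subst_pconsts]; ext a
  simp [mem_pcImg, Fm.pconsts]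

lemma subst1J_jconsts (ψ : Fm) (v u : ℕ) : (ψ.subst1J v (.var u)).jconsts = ψ.jconsts := by
  show (ψ.subst (Subst.id.updJ v (.var u))).jconsts = _
  rw [subst_jconsts]; ext a
  simp [mem_jcImg, Fm.jconsts, upd_var_consts, Tm.consts]

lemma subst1J_fvarJ (ψ : Fm) (v u : ℕ) : (ψ.subst1J v (.var u)).fvarJ =
    (ψ.fvarJ.erase v) ∪ (if v ∈ ψ.fvarJ then {u} else ∅) := by
  show (ψ.subst (Subst.id.updJ v (.var u))).fvarJ = _
  rw [subst_fvarJ]; ext a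
  simp only [mem_jImg, updJ_pv, updJ_jv, updJ_pc, updJ_jc, id_pv, id_jv, id_pc, id_jc,
    upd_var_vars, Fm.fvarJ, Tm.vars, Finset.notMem_empty, and_false, exists_false,
    false_or, or_false, Finset.mem_union, Finset.mem_erase]
  constructor
  · rintro ⟨w, hw, ha⟩
    by_cases hwv : w = v
    · subst hwv
      rw [if_pos rfl, Finset.mem_singleton] at ha
      rw [if_pos hw, ha]
      exact Or.inr (Finset.mem_singleton_self u)
    · rw [if_neg hwv, Finset.mem_singleton] at ha
      rw [ha]
      exact Or.inl ⟨hwv, hw⟩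
  · rintro (⟨hav, ha⟩ | h)
    · exact ⟨a, ha, by rw [if_neg hav]; exact Finset.mem_singleton_self a⟩
    · by_cases hvm : v ∈ ψ.fvarJ
      · rw [if_pos hvm, Finset.mem_singleton] at h
        rw [h]
        exact ⟨v, hvm, by rw [if_pos rfl]; exact Finset.mem_singleton_self u⟩
      · rw [if_neg hvm] at h; exact absurd h (Finset.notMem_empty a)

lemma subst1P_fvarJ (ψ : Fm) (y x : ℕ) : (ψ.subst1P y (.pvar x)).fvarJ = ψ.fvarJ := by
  show (ψ.subst (Subst.id.updP y (.pvar x))).fvarJ = _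
  rw [subst_fvarJ]; ext a
  simp [mem_jImg, Fm.fvarJ, upd_pvar_fvarJ, Tm.vars]

lemma subst1P_pconsts (ψ : Fm) (y x : ℕ) : (ψ.subst1P y (.pvar x)).pconsts = ψ.pconsts := by
  show (ψ.subst (Subst.id.updP y (.pvar x))).pconsts = _
  rw [subst_pconsts]; ext a
  simp [mem_pcImg, Fm.pconsts, upd_pvar_pconsts]

lemma subst1P_jconsts (ψ : Fm) (y x : ℕ) : (ψ.subst1P y (.pvar x)).jconsts = ψ.jconsts := by
  show (ψ.subst (Subst.id.updP y (.pvar x))).jconsts = _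
  rw [subst_jconsts]; ext a
  simp [mem_jcImg, Fm.jconsts, upd_pvar_jconsts, Tm.consts]

lemma subst1P_fvarP (ψ : Fm) (y x : ℕ) : (ψ.subst1P y (.pvar x)).fvarP =
    (ψ.fvarP.erase y) ∪ (if y ∈ ψ.fvarP then {x} else ∅) := by
  show (ψ.subst (Subst.id.updP y (.pvar x))).fvarP = _
  rw [subst_fvarP]; ext a
  simp only [mem_pImg, updP_pv, updP_pc, id_pv, id_pc, upd_pvar_fvarP, Fm.fvarP,
    Finset.notMem_empty, and_false, exists_false, false_or, or_false,
    Finset.mem_union, Finset.mem_erase]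
  constructor
  · rintro ⟨w, hw, ha⟩
    by_cases hwy : w = y
    · subst hwy
      rw [if_pos rfl, Finset.mem_singleton] at ha
      rw [if_pos hw, ha]
      exact Or.inr (Finset.mem_singleton_self x)
    · rw [if_neg hwy, Finset.mem_singleton] at ha
      rw [ha]
      exact Or.inl ⟨hwy, hw⟩
  · rintro (⟨hay, ha⟩ | h)
    · exact ⟨a, ha, by rw [if_neg hay]; exact Finset.mem_singleton_self a⟩
    · by_cases hym : y ∈ ψ.fvarP
      · rw [if_pos hym, Finset.mem_singleton] at h
        rw [h]
        exact ⟨y, hym, by rw [if_pos rfl]; exact Finset.mem_singleton_self x⟩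
      · rw [if_neg hym] at h; exact absurd h (Finset.notMem_empty a)

/-- alpha-congruent formulas have identical substitution instances -/
theorem alpha_subst {φ ψ : Fm} (h : Alpha φ ψ) : ∀ σ : Subst, φ.subst σ = ψ.subst σ := by
  induction h with
  | refl φ => intro σ; rfl
  | symm _ ih => intro σ; exact (ih σ).symm
  | trans _ _ ih1 ih2 => intro σ; exact (ih1 σ).trans (ih2 σ)
  | imp _ _ ih1 ih2 => intro σ; simp only [Fm.subst, ih1, ih2]
  | ideq _ _ ih1 ih2 => intro σ; simp only [Fm.subst, ih1, ih2]
  | ref _ _ ih1 ih2 => intro σ; simp only [Fm.subst, ih1, ih2]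
  | neg _ ih => intro σ; simp only [Fm.subst, ih]
  | isTrue _ ih => intro σ; simp only [Fm.subst, ih]
  | isFalse _ ih => intro σ; simp only [Fm.subst, ih]
  | box _ ih => intro σ; simp only [Fm.subst, ih]
  | just t _ ih => intro σ; simp only [Fm.subst, ih]
  | @jAll φ u v ψ h1 h2 ih =>
      intro σ
      have hid := ih Subst.id
      have e1 : φ.fvarP = ψ.fvarP := by
        have := congrArg Fm.fvarP hid
        rwa [subst_id_fvarP, subst_id_fvarP, subst1J_fvarP] at this
      have e3 : φ.pconsts = ψ.pconsts := by
        have := congrArg Fm.pconsts hid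
        rwa [subst_id_pconsts, subst_id_pconsts, subst1J_pconsts] at this
      have e4 : φ.jconsts = ψ.jconsts := by
        have := congrArg Fm.jconsts hid
        rwa [subst_id_jconsts, subst_id_jconsts, subst1J_jconsts] at this
      have e2 : φ.fvarJ = (ψ.fvarJ.erase v) ∪ (if v ∈ ψ.fvarJ then {u} else ∅) := by
        have := congrArg Fm.fvarJ hid
        rwa [subst_id_fvarJ, subst_id_fvarJ, subst1J_fvarJ] at this
      have e2' : φ.fvarJ.erase u = ψ.fvarJ.erase v := by
        rw [e2]; ext a
        simp only [Finset.mem_erase, Finset.mem_union]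
        constructor
        · rintro ⟨hau, (⟨hav, haS⟩ | hite)⟩
          · exact ⟨hav, haS⟩
          · by_cases hvm : v ∈ ψ.fvarJ
            · rw [if_pos hvm, Finset.mem_singleton] at hite; exact absurd hite hau
            · rw [if_neg hvm] at hite; exact absurd hite (Finset.notMem_empty a)
        · rintro ⟨hav, haS⟩
          refine ⟨?_, Or.inl ⟨hav, haS⟩⟩
          intro hau
          subst hau
          by_cases huv : a = v
          · exact hav huv
          · exact h2 huv haS
      have hforced : jForced σ (.jAll u φ) = jForced σ (.jAll v ψ) :=
        jForced_congr (by simp only [Fm.fvarP]; exact e1) (by simp only [Fm.pconsts]; exact e3)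
          (by simp only [Fm.fvarJ]; exact e2') (by simp only [Fm.jconsts]; exact e4)
      rw [subst_jAll, subst_jAll, hforced]
      congr 1
      rw [ih (σ.updJ u (.var (jForced σ (.jAll v ψ)))),
        show Fm.subst1J ψ v (.var u) = ψ.subst (Subst.id.updJ v (.var u)) from rfl, subst_comp]
      apply subst_congr
      · intro w _; rfl
      · intro w hw
        simp only [comp_jv, updJ_jv, id_jv, Function.update_apply]
        by_cases hwv : w = v
        · simp [hwv, Tm.subst]
        · rw [if_neg hwv]
          show Tm.subst (.var w) _ = _
          by_cases hwu : w = u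
          · subst hwu
            exact absurd hw (h2 hwv)
          · simp [Tm.subst, Function.update_apply, hwu, hwv]
      · intro d _; rfl
      · intro c _; rfl
  | @fAll φ x y ψ h1 h2 ih =>
      intro σ
      have hid := ih Subst.id
      have e1 : φ.fvarJ = ψ.fvarJ := by
        have := congrArg Fm.fvarJ hid
        rwa [subst_id_fvarJ, subst_id_fvarJ, subst1P_fvarJ] at this
      have e3 : φ.pconsts = ψ.pconsts := by
        have := congrArg Fm.pconsts hid
        rwa [subst_id_pconsts, subst_id_pconsts, subst1P_pconsts] at this
      have e4 : φ.jconsts = ψ.jconsts := by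
        have := congrArg Fm.jconsts hid
        rwa [subst_id_jconsts, subst_id_jconsts, subst1P_jconsts] at this
      have e2 : φ.fvarP = (ψ.fvarP.erase y) ∪ (if y ∈ ψ.fvarP then {x} else ∅) := by
        have := congrArg Fm.fvarP hid
        rwa [subst_id_fvarP, subst_id_fvarP, subst1P_fvarP] at this
      have e2' : φ.fvarP.erase x = ψ.fvarP.erase y := by
        rw [e2]; ext a
        simp only [Finset.mem_erase, Finset.mem_union]
        constructor
        · rintro ⟨hax, (⟨hay, haS⟩ | hite)⟩
          · exact ⟨hay, haS⟩
          · by_cases hym : y ∈ ψ.fvarP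
            · rw [if_pos hym, Finset.mem_singleton] at hite; exact absurd hite hax
            · rw [if_neg hym] at hite; exact absurd hite (Finset.notMem_empty a)
        · rintro ⟨hay, haS⟩
          refine ⟨?_, Or.inl ⟨hay, haS⟩⟩
          intro hax
          subst hax
          by_cases hxy : a = y
          · exact hay hxy
          · exact h2 hxy haS
      have hforced : pForced σ (.fAll x φ) = pForced σ (.fAll y ψ) :=
        pForced_congr (by simp only [Fm.fvarP]; exact e2') (by simp only [Fm.pconsts]; exact e3)
      rw [subst_fAll, subst_fAll, hforced]
      congr 1
      rw [ih (σ.updP x (.pvar (pForced σ (.fAll y ψ)))),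
        show Fm.subst1P ψ y (.pvar x) = ψ.subst (Subst.id.updP y (.pvar x)) from rfl, subst_comp]
      apply subst_congr
      · intro w hw
        simp only [comp_pv, updP_pv, id_pv, Function.update_apply]
        by_cases hwy : w = y
        · simp [hwy, Fm.subst]
        · rw [if_neg hwy]
          show Fm.subst (.pvar w) _ = _
          by_cases hwx : w = x
          · subst hwx
            exact absurd hw (h2 hwy)
          · simp [Fm.subst, Function.update_apply, hwx, hwy]
      · intro w _; rfl
      · intro d _; rfl
      · intro c _; rfl

/-- the normal form is alpha-congruent to the original formula -/
theorem subst_id_alpha : ∀ φ : Fm, Alpha (φ.subst Subst.id) φ := by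
  intro φ
  induction φ with
  | pvar x => exact Alpha.refl _
  | pconst d => exact Alpha.refl _
  | imp φ ψ ih1 ih2 => exact Alpha.imp ih1 ih2
  | neg φ ih => exact Alpha.neg ih
  | ideq φ ψ ih1 ih2 => exact Alpha.ideq ih1 ih2
  | ref φ ψ ih1 ih2 => exact Alpha.ref ih1 ih2
  | teq s t =>
      rw [show (Fm.teq s t).subst Subst.id = .teq (s.subst Subst.id) (t.subst Subst.id) from rfl,
        tm_subst_id, tm_subst_id]
      exact Alpha.refl _
  | tle s t =>
      rw [show (Fm.tle s t).subst Subst.id = .tle (s.subst Subst.id) (t.subst Subst.id) from rfl,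
        tm_subst_id, tm_subst_id]
      exact Alpha.refl _
  | isTrue φ ih => exact Alpha.isTrue ih
  | isFalse φ ih => exact Alpha.isFalse ih
  | box φ ih => exact Alpha.box ih
  | just φ t ih =>
      rw [show (Fm.just φ t).subst Subst.id = .just (φ.subst Subst.id) (t.subst Subst.id) from rfl,
        tm_subst_id]
      exact Alpha.just t ih
  | fAll x φ _ =>
      rw [subst_fAll]
      refine Alpha.fAll (Alpha.refl _) ?_
      intro hyx hymem
      have hmem : pForced Subst.id (.fAll x φ) ∈ pImg Subst.id (.fAll x φ) :=
        mem_pImg.2 (Or.inl ⟨pForced Subst.id (.fAll x φ),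
          by simp [Fm.fvarP, Finset.mem_erase, hyx, hymem], by simp [Fm.fvarP]⟩)
      exact absurd (lt_pForced hmem) (lt_irrefl _)
  | jAll u φ _ =>
      rw [subst_jAll]
      refine Alpha.jAll (Alpha.refl _) ?_
      intro hvu hvmem
      have hmem : jForced Subst.id (.jAll u φ) ∈ jImg Subst.id (.jAll u φ) :=
        mem_jImg.2 (Or.inr (Or.inr (Or.inl ⟨jForced Subst.id (.jAll u φ),
          by simp [Fm.fvarJ, Finset.mem_erase, hvu, hvmem], by simp [Tm.vars]⟩)))
      exact absurd (lt_jForced hmem) (lt_irrefl _)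

end EJ
/-- φ =_α ψ iff φ[ε] = ψ[ε]; moreover φ[ε] =_α φ. -/
theorem alpha_normal_form (φ ψ : EJ.Fm) :
    (EJ.Alpha φ ψ ↔ φ.subst EJ.Subst.id = ψ.subst EJ.Subst.id) ∧
    EJ.Alpha (φ.subst EJ.Subst.id) φ := by
  refine ⟨⟨fun h => EJ.alpha_subst h EJ.Subst.id, fun h => ?_⟩, EJ.subst_id_alpha φ⟩
  have h2 : EJ.Alpha (φ.subst EJ.Subst.id) ψ := by rw [h]; exact EJ.subst_id_alpha ψ
  exact EJ.Alpha.trans (EJ.Alpha.symm (EJ.subst_id_alpha φ)) h2
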